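/- For a random variable X following the falling factorial distribution with parameter (n, θ), the score function l̇_θ(X) = X/θ − Σ_{i=1}^n 1/(θ+i-1) has expectation zero, and the Fisher information E[(l̇_θ(X))^2] equals ℓ_n(θ)/θ, where ℓ_n(θ) = Σ_{i=1}^n (i-1)/(θ+i-1)^2. -/

import Mathlib

open MeasureTheory ProbabilityTheory Finset

noncomputable def ellFn (m : ℕ) (θ : ℝ) : ℝ := ∑ i ∈ Finset.Icc 1 m, ((i : ℝ) - 1) / (θ + i - 1) ^ 2
noncomputable def Lfn (m : ℕ) (θ : ℝ) : ℝ := ∑ i ∈ Finset.Icc 1 m, 1 / (θ + i - 1)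
noncomputable def ffPMF (n : ℕ) (θ : ℝ) (x : ℕ) : ℝ :=
  ((ascPochhammer ℕ n).coeff x : ℝ) * θ ^ x / (ascPochhammer ℝ n).eval θ

section Aux

open Polynomial

lemma FF.sum_Icc_one (m : ℕ) (f : ℕ → ℝ) :
    ∑ i ∈ Finset.Icc 1 m, f i = ∑ i ∈ Finset.range m, f (i + 1) := by
  induction m with
  | zero => simp
  | succ m ih => rw [Finset.sum_Icc_succ_top (by omega), ih, Finset.sum_range_succ]

lemma FF.asc_eval_prod (n : ℕ) (t : ℝ) :
    (ascPochhammer ℝ n).eval t = ∏ i ∈ Finset.range n, (t + i) := by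
  induction n with
  | zero => simp
  | succ n ih => rw [ascPochhammer_succ_eval, ih, Finset.prod_range_succ]

lemma FF.asc_coeff (n x : ℕ) :
    (ascPochhammer ℝ n).coeff x = ((ascPochhammer ℕ n).coeff x : ℝ) := by
  rw [← ascPochhammer_map (Nat.castRingHom ℝ) n, Polynomial.coeff_map]
  simp

lemma FF.sumA (n : ℕ) (t : ℝ) :
    ∑ x ∈ Finset.range (n + 1), ((ascPochhammer ℕ n).coeff x : ℝ) * t ^ x
      = ∏ i ∈ Finset.range n, (t + i) := by
  rw [← FF.asc_eval_prod, Polynomial.eval_eq_sum_range' (n := n + 1)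
    (by rw [ascPochhammer_natDegree]; omega)]
  exact Finset.sum_congr rfl fun x _ => by rw [FF.asc_coeff]

lemma FF.hasDeriv_prod (s : Finset ℕ) (t : ℝ) :
    HasDerivAt (fun u => ∏ i ∈ s, (u + (i : ℝ)))
      (∑ i ∈ s, ∏ j ∈ s.erase i, (t + j)) t := by
  have h := HasDerivAt.fun_finsetProd (u := s)
    (f := fun i u => u + (i : ℝ)) (f' := fun _ => 1) (x := t)
    (fun i _ => (hasDerivAt_id t).add_const _)
  simpa using h

lemma FF.Qform (n : ℕ) (t : ℝ) :
    ∑ x ∈ Finset.range (n + 1), (x : ℝ) * (((ascPochhammer ℕ n).coeff x : ℝ) * t ^ x)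
      = ∑ i ∈ Finset.range n, t * ∏ j ∈ (Finset.range n).erase i, (t + j) := by
  set c : ℕ → ℝ := fun x => ((ascPochhammer ℕ n).coeff x : ℝ) with hc
  have h1 : HasDerivAt (fun s => ∑ x ∈ Finset.range (n + 1), c x * s ^ x)
      (∑ x ∈ Finset.range (n + 1), c x * (x * t ^ (x - 1))) t :=
    HasDerivAt.fun_sum fun x _ => (hasDerivAt_pow x t).const_mul (c x)
  have h2 := FF.hasDeriv_prod (Finset.range n) t
  have hfun : (fun s => ∑ x ∈ Finset.range (n + 1), c x * s ^ x)
      = fun s => ∏ i ∈ Finset.range n, (s + (i : ℝ)) := funext fun s => FF.sumA n s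
  rw [hfun] at h1
  have hD := h1.unique h2
  calc ∑ x ∈ Finset.range (n + 1), (x : ℝ) * (c x * t ^ x)
      = t * ∑ x ∈ Finset.range (n + 1), c x * (x * t ^ (x - 1)) := by
        rw [Finset.mul_sum]
        refine Finset.sum_congr rfl fun x _ => ?_
        cases x with
        | zero => simp
        | succ m => simp [pow_succ]; ring
    _ = t * ∑ i ∈ Finset.range n, ∏ j ∈ (Finset.range n).erase i, (t + j) := by rw [hD]
    _ = _ := by rw [Finset.mul_sum]

lemma FF.Q2form (n : ℕ) (t : ℝ) :
    ∑ x ∈ Finset.range (n + 1), (x : ℝ)^2 * (((ascPochhammer ℕ n).coeff x : ℝ) * t ^ x)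
      = ∑ i ∈ Finset.range n, (t * ∏ j ∈ (Finset.range n).erase i, (t + j)
          + t^2 * ∑ j ∈ (Finset.range n).erase i,
              ∏ k ∈ ((Finset.range n).erase i).erase j, (t + k)) := by
  set c : ℕ → ℝ := fun x => ((ascPochhammer ℕ n).coeff x : ℝ) with hc
  have h1 : HasDerivAt (fun s => ∑ x ∈ Finset.range (n + 1), ((x : ℝ) * c x) * s ^ x)
      (∑ x ∈ Finset.range (n + 1), ((x : ℝ) * c x) * (x * t ^ (x - 1))) t :=
    HasDerivAt.fun_sum fun x _ => (hasDerivAt_pow x t).const_mul _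
  have h2 : HasDerivAt (fun s => ∑ i ∈ Finset.range n,
        s * ∏ j ∈ (Finset.range n).erase i, (s + (j:ℝ)))
      (∑ i ∈ Finset.range n, (1 * ∏ j ∈ (Finset.range n).erase i, (t + j)
        + t * ∑ j ∈ (Finset.range n).erase i,
            ∏ k ∈ ((Finset.range n).erase i).erase j, (t + k))) t :=
    HasDerivAt.fun_sum fun i _ => (hasDerivAt_id t).fun_mul (FF.hasDeriv_prod _ t)
  have hfun : (fun s => ∑ x ∈ Finset.range (n + 1), ((x:ℝ) * c x) * s ^ x)
      = fun s => ∑ i ∈ Finset.range n, s * ∏ j ∈ (Finset.range n).erase i, (s + (j:ℝ)) := by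
    funext s
    simpa [mul_assoc] using FF.Qform n s
  rw [hfun] at h1
  have hD := h1.unique h2
  calc ∑ x ∈ Finset.range (n + 1), (x : ℝ)^2 * (c x * t ^ x)
      = t * ∑ x ∈ Finset.range (n + 1), ((x:ℝ) * c x) * (x * t ^ (x - 1)) := by
        rw [Finset.mul_sum]
        refine Finset.sum_congr rfl fun x _ => ?_
        cases x with
        | zero => simp
        | succ m => simp [pow_succ]; ring
    _ = t * ∑ i ∈ Finset.range n, (1 * ∏ j ∈ (Finset.range n).erase i, (t + j)
        + t * ∑ j ∈ (Finset.range n).erase i,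
            ∏ k ∈ ((Finset.range n).erase i).erase j, (t + k)) := by rw [hD]
    _ = _ := by rw [Finset.mul_sum]; exact Finset.sum_congr rfl fun i _ => by ring

lemma FF.sum_prod_erase {θ : ℝ} (hθ : 0 < θ) (s : Finset ℕ) :
    ∑ i ∈ s, ∏ j ∈ s.erase i, (θ + (j:ℝ))
      = (∏ j ∈ s, (θ + (j:ℝ))) * ∑ i ∈ s, 1 / (θ + (i:ℝ)) := by
  rw [Finset.mul_sum]
  refine Finset.sum_congr rfl fun i hi => ?_
  have hA : θ + (i:ℝ) ≠ 0 := by positivity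
  rw [← Finset.prod_erase_mul s _ hi]
  field_simp

lemma FF.mom1 (n : ℕ) {θ : ℝ} (hθ : 0 < θ) :
    ∑ x ∈ Finset.range (n + 1), (x : ℝ) * (((ascPochhammer ℕ n).coeff x : ℝ) * θ ^ x)
      = (∏ i ∈ Finset.range n, (θ + i)) * (θ * ∑ i ∈ Finset.range n, 1 / (θ + (i:ℝ))) := by
  rw [FF.Qform, ← Finset.mul_sum, FF.sum_prod_erase hθ]
  ring

lemma FF.mom2 (n : ℕ) {θ : ℝ} (hθ : 0 < θ) :
    ∑ x ∈ Finset.range (n + 1), (x : ℝ)^2 * (((ascPochhammer ℕ n).coeff x : ℝ) * θ ^ x)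
      = (∏ i ∈ Finset.range n, (θ + i)) *
        (θ * ∑ i ∈ Finset.range n, 1 / (θ + (i:ℝ))
         + θ^2 * (∑ i ∈ Finset.range n, 1 / (θ + (i:ℝ)))^2
         - θ^2 * ∑ i ∈ Finset.range n, (1 / (θ + (i:ℝ)))^2) := by
  set L : ℝ := ∑ i ∈ Finset.range n, 1 / (θ + (i:ℝ)) with hL
  set P : ℝ := ∏ i ∈ Finset.range n, (θ + (i:ℝ)) with hP
  rw [FF.Q2form]
  have expand : θ * L + θ^2 * L^2 - θ^2 * ∑ i ∈ Finset.range n, (1 / (θ + (i:ℝ)))^2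
      = ∑ i ∈ Finset.range n,
          (θ * (1 / (θ + (i:ℝ))) + θ^2 * L * (1 / (θ + (i:ℝ))) - θ^2 * (1 / (θ + (i:ℝ)))^2) := by
    rw [Finset.sum_sub_distrib, Finset.sum_add_distrib, ← Finset.mul_sum, ← Finset.mul_sum,
      ← Finset.mul_sum, ← hL]
    ring
  rw [expand, Finset.mul_sum]
  refine Finset.sum_congr rfl fun i hi => ?_
  have hA : θ + (i:ℝ) ≠ 0 := by positivity
  rw [FF.sum_prod_erase hθ, Finset.sum_erase_eq_sub hi, ← hL]
  have hprod : (∏ j ∈ (Finset.range n).erase i, (θ + (j:ℝ))) * (θ + (i:ℝ)) = P :=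
    Finset.prod_erase_mul _ _ hi
  rw [← hprod]
  field_simp
  ring

lemma FF.nullMeasurableSet_of_add_compl {Ω : Type*} [MeasurableSpace Ω] {μ : Measure Ω}
    [IsFiniteMeasure μ] {s : Set Ω} (h : μ s + μ sᶜ ≤ μ Set.univ) :
    NullMeasurableSet s μ := by
  have hge : μ Set.univ ≤ μ s + μ sᶜ := by
    calc μ Set.univ = μ (s ∪ sᶜ) := by rw [Set.union_compl_self]
    _ ≤ μ s + μ sᶜ := measure_union_le _ _
  have heq : μ s + μ sᶜ = μ Set.univ := le_antisymm h hge
  set B := toMeasurable μ s with hB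
  set C := toMeasurable μ sᶜ with hC
  have hsB : s ⊆ B := subset_toMeasurable μ s
  have hsC : sᶜ ⊆ C := subset_toMeasurable μ sᶜ
  have hBC : B ∪ C = Set.univ := Set.eq_univ_of_univ_subset
    (by rw [← Set.union_compl_self s]; exact Set.union_subset_union hsB hsC)
  have hkey : μ (B ∪ C) + μ (B ∩ C) = μ B + μ C :=
    measure_union_add_inter₀ B (measurableSet_toMeasurable μ sᶜ).nullMeasurableSet
  rw [hBC, measure_toMeasurable, measure_toMeasurable, heq] at hkey
  have hnull : μ (B ∩ C) = 0 := by
    have := measure_ne_top μ Set.univ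
    exact (ENNReal.add_right_inj this).mp (by rw [hkey, add_zero])
  refine ⟨Cᶜ, (measurableSet_toMeasurable μ sᶜ).compl, ?_⟩
  have hCs : Cᶜ ⊆ s := fun ω hω => by
    by_contra hs; exact hω (hsC hs)
  refine (MeasureTheory.ae_eq_set.2 ⟨?_, ?_⟩)
  · refine measure_mono_null (fun ω hω => ?_) hnull
    exact ⟨hsB hω.1, not_not.mp fun hc => hω.2 hc⟩
  · rw [Set.diff_eq_empty.2 hCs, measure_empty]

lemma FF.asc_eval_pos {θ : ℝ} (hθ : 0 < θ) (n : ℕ) : 0 < (ascPochhammer ℝ n).eval θ := by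
  rw [FF.asc_eval_prod]
  exact Finset.prod_pos fun i _ => by positivity

lemma FF.ffPMF_nonneg {θ : ℝ} (hθ : 0 < θ) (n x : ℕ) : 0 ≤ ffPMF n θ x :=
  div_nonneg (mul_nonneg (Nat.cast_nonneg _) (pow_nonneg hθ.le _)) (FF.asc_eval_pos hθ n).le

lemma FF.ffPMF_eq_zero {θ : ℝ} (n x : ℕ) (hx : n < x) : ffPMF n θ x = 0 := by
  have : (ascPochhammer ℕ n).coeff x = 0 :=
    Polynomial.coeff_eq_zero_of_natDegree_lt (by rw [ascPochhammer_natDegree]; exact hx)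
  simp [ffPMF, this]

lemma FF.ffPMF_sum {θ : ℝ} (hθ : 0 < θ) (n : ℕ) :
    ∑ x ∈ Finset.range (n + 1), ffPMF n θ x = 1 := by
  unfold ffPMF
  rw [← Finset.sum_div, FF.sumA, ← FF.asc_eval_prod, div_self (FF.asc_eval_pos hθ n).ne']

lemma FF.ff_integral {Ω : Type*} [MeasurableSpace Ω] {μ : Measure Ω} [IsProbabilityMeasure μ]
    {X : Ω → ℕ} {n : ℕ} {θ : ℝ} (hθ : 0 < θ)
    (hX : ∀ x : ℕ, μ {ω | X ω = x} = ENNReal.ofReal (ffPMF n θ x)) (g : ℕ → ℝ) :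
    ∫ ω, g (X ω) ∂μ = ∑ x ∈ Finset.range (n + 1), g x * ffPMF n θ x := by
  have hp0 : ∀ x, 0 ≤ ffPMF n θ x := FF.ffPMF_nonneg hθ n
  have hpz : ∀ x, n < x → ffPMF n θ x = 0 := fun x => FF.ffPMF_eq_zero n x
  have htsum : (∑' y : ℕ, μ {ω | X ω = y}) = 1 := by
    simp only [hX]
    rw [tsum_eq_sum (s := Finset.range (n + 1))
      (fun y hy => by rw [hpz y (by simpa using hy)]; simp)]
    rw [← ENNReal.ofReal_sum_of_nonneg (fun x _ => hp0 x), FF.ffPMF_sum hθ, ENNReal.ofReal_one]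
  have hnullset : ∀ x : ℕ, NullMeasurableSet {ω | X ω = x} μ := by
    intro x
    apply FF.nullMeasurableSet_of_add_compl
    have hcompl : μ {ω | X ω = x}ᶜ ≤ ∑' y : ℕ, if y = x then 0 else μ {ω | X ω = y} := by
      have hsub : {ω | X ω = x}ᶜ ⊆ ⋃ y : ℕ, (if y = x then (∅ : Set Ω) else {ω | X ω = y}) := by
        intro ω hω
        have hne : ¬ X ω = x := hω
        refine Set.mem_iUnion.2 ⟨X ω, ?_⟩
        rw [if_neg hne]
        exact rfl
      refine le_trans (measure_mono hsub) (le_trans (measure_iUnion_le _) ?_)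
      refine ENNReal.tsum_le_tsum fun y => ?_
      split <;> simp
    calc μ {ω | X ω = x} + μ {ω | X ω = x}ᶜ
        ≤ μ {ω | X ω = x} + ∑' y : ℕ, if y = x then 0 else μ {ω | X ω = y} :=
          add_le_add_right hcompl _
      _ = ∑' y : ℕ, μ {ω | X ω = y} := by
          rw [ENNReal.tsum_eq_add_tsum_ite (f := fun y => μ {ω | X ω = y}) x]
          congr!
      _ = 1 := htsum
      _ = μ Set.univ := (measure_univ (μ := μ)).symm
  have hnm : NullMeasurable X μ := by
    intro s _
    have : X ⁻¹' s = ⋃ y ∈ s, {ω | X ω = y} := by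
      ext ω; simp [Set.mem_iUnion, eq_comm]
    rw [this]
    exact NullMeasurableSet.biUnion s.to_countable fun y _ => hnullset y
  have hXae : AEMeasurable X μ := hnm.aemeasurable
  set Y := hXae.mk X with hYdef
  have hY : Measurable Y := hXae.measurable_mk
  have hXY : X =ᵐ[μ] Y := hXae.ae_eq_mk
  have hμY : ∀ x : ℕ, μ {ω | Y ω = x} = ENNReal.ofReal (ffPMF n θ x) := by
    intro x
    rw [← hX x]
    refine measure_congr ?_
    filter_upwards [hXY] with ω h
    show (Y ω = x) = (X ω = x)
    rw [h]
  have hbig : μ {ω | n < Y ω} = 0 := by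
    have : {ω | n < Y ω} = ⋃ y : ℕ, ⋃ _ : n < y, {ω | Y ω = y} := by
      ext ω; simp [eq_comm]
    rw [this]
    refine measure_iUnion_null fun y => measure_iUnion_null fun hy => ?_
    rw [hμY y, hpz y hy]; simp
  have hae : (fun ω => g (Y ω)) =ᵐ[μ]
      (fun ω => ∑ x ∈ Finset.range (n + 1),
        Set.indicator {ω' | Y ω' = x} (fun _ => g x) ω) := by
    have h1 : ∀ᵐ ω ∂μ, ¬ n < Y ω := ae_iff.mpr (by simpa using hbig)
    filter_upwards [h1] with ω hω
    rw [Finset.sum_eq_single_of_mem (Y ω) (by simp; omega)]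
    · rw [Set.indicator_of_mem (by exact rfl)]
    · intro b _ hb
      rw [Set.indicator_of_notMem (fun h => hb (by simpa using h.symm))]
  calc ∫ ω, g (X ω) ∂μ = ∫ ω, g (Y ω) ∂μ :=
        integral_congr_ae (by filter_upwards [hXY] with ω h; rw [h])
    _ = ∫ ω, ∑ x ∈ Finset.range (n + 1),
          Set.indicator {ω' | Y ω' = x} (fun _ => g x) ω ∂μ := integral_congr_ae hae
    _ = ∑ x ∈ Finset.range (n + 1),
          ∫ ω, Set.indicator {ω' | Y ω' = x} (fun _ => g x) ω ∂μ :=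
        integral_finset_sum _ fun x _ =>
          (integrable_const (g x)).indicator (hY (measurableSet_singleton x))
    _ = ∑ x ∈ Finset.range (n + 1), g x * ffPMF n θ x := by
        refine Finset.sum_congr rfl fun x _ => ?_
        have hsm : MeasurableSet {ω' | Y ω' = x} := hY (measurableSet_singleton x)
        rw [integral_indicator_const (g x) hsm, measureReal_def, hμY x,
          ENNReal.toReal_ofReal (hp0 x), smul_eq_mul, mul_comm]

end Aux

theorem ff_score (Ω : Type*) [MeasurableSpace Ω] (μ : Measure Ω) [IsProbabilityMeasure μ]
    (X : Ω → ℕ) (n : ℕ) (θ : ℝ) (hn : 1 ≤ n) (hθ : 0 < θ)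
    (hX : ∀ x : ℕ, μ {ω | X ω = x} = ENNReal.ofReal (ffPMF n θ x)) :
    (∫ ω, ((X ω : ℝ) / θ - Lfn n θ) ∂μ = 0) ∧
    (∫ ω, ((X ω : ℝ) / θ - Lfn n θ) ^ 2 ∂μ = ellFn n θ / θ) := by
  have hθ' : θ ≠ 0 := hθ.ne'
  set L : ℝ := ∑ i ∈ Finset.range n, 1 / (θ + (i:ℝ)) with hLdef
  set M : ℝ := ∑ i ∈ Finset.range n, (1 / (θ + (i:ℝ)))^2 with hMdef
  have hLfn : Lfn n θ = L := by
    rw [Lfn, FF.sum_Icc_one]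
    refine Finset.sum_congr rfl fun i _ => ?_
    push_cast
    ring_nf
  have hell : ellFn n θ = L - θ * M := by
    rw [ellFn, FF.sum_Icc_one, hLdef, hMdef, Finset.mul_sum, ← Finset.sum_sub_distrib]
    refine Finset.sum_congr rfl fun i _ => ?_
    have hA : θ + (i:ℝ) ≠ 0 := by positivity
    push_cast
    have e1 : θ + ((i:ℝ) + 1) - 1 = θ + i := by ring
    have e2 : ((i:ℝ) + 1) - 1 = (i:ℝ) := by ring
    rw [e1, e2]
    field_simp
    ring
  -- pmf moments
  have hP : (ascPochhammer ℝ n).eval θ = ∏ i ∈ Finset.range n, (θ + (i:ℝ)) :=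
    FF.asc_eval_prod n θ
  have hPne : (∏ i ∈ Finset.range n, (θ + (i:ℝ))) ≠ 0 := by
    rw [← hP]; exact (FF.asc_eval_pos hθ n).ne'
  have hS0 : ∑ x ∈ Finset.range (n + 1), ffPMF n θ x = 1 := FF.ffPMF_sum hθ n
  have hS1 : ∑ x ∈ Finset.range (n + 1), (x:ℝ) * ffPMF n θ x = θ * L := by
    have h1 : ∑ x ∈ Finset.range (n + 1), (x:ℝ) * ffPMF n θ x
        = (∑ x ∈ Finset.range (n + 1),
            (x:ℝ) * (((ascPochhammer ℕ n).coeff x : ℝ) * θ ^ x)) / (∏ i ∈ Finset.range n, (θ + (i:ℝ))) := by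
      rw [Finset.sum_div]
      refine Finset.sum_congr rfl fun x _ => ?_
      rw [ffPMF, hP]
      ring
    rw [h1, FF.mom1 n hθ, ← hLdef]
    field_simp
  have hS2 : ∑ x ∈ Finset.range (n + 1), (x:ℝ)^2 * ffPMF n θ x
      = θ * L + θ^2 * L^2 - θ^2 * M := by
    have h1 : ∑ x ∈ Finset.range (n + 1), (x:ℝ)^2 * ffPMF n θ x
        = (∑ x ∈ Finset.range (n + 1),
            (x:ℝ)^2 * (((ascPochhammer ℕ n).coeff x : ℝ) * θ ^ x)) / (∏ i ∈ Finset.range n, (θ + (i:ℝ))) := by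
      rw [Finset.sum_div]
      refine Finset.sum_congr rfl fun x _ => ?_
      rw [ffPMF, hP]
      ring
    rw [h1, FF.mom2 n hθ, ← hLdef, ← hMdef]
    field_simp
  constructor
  · calc ∫ ω, ((X ω : ℝ) / θ - Lfn n θ) ∂μ
        = ∑ x ∈ Finset.range (n + 1), ((x:ℝ)/θ - Lfn n θ) * ffPMF n θ x :=
          FF.ff_integral hθ hX (fun x => (x:ℝ)/θ - Lfn n θ)
      _ = (∑ x ∈ Finset.range (n + 1), (x:ℝ) * ffPMF n θ x) * (1/θ)
            - Lfn n θ * ∑ x ∈ Finset.range (n + 1), ffPMF n θ x := by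
          rw [Finset.sum_mul, Finset.mul_sum, ← Finset.sum_sub_distrib]
          exact Finset.sum_congr rfl fun x _ => by ring
      _ = 0 := by
          rw [hS1, hS0, hLfn]
          field_simp
          ring
  · calc ∫ ω, ((X ω : ℝ) / θ - Lfn n θ)^2 ∂μ
        = ∑ x ∈ Finset.range (n + 1), ((x:ℝ)/θ - Lfn n θ)^2 * ffPMF n θ x :=
          FF.ff_integral hθ hX (fun x => ((x:ℝ)/θ - Lfn n θ)^2)
      _ = (∑ x ∈ Finset.range (n + 1), (x:ℝ)^2 * ffPMF n θ x) * (1/θ^2)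
            - (2 * Lfn n θ / θ) * ∑ x ∈ Finset.range (n + 1), (x:ℝ) * ffPMF n θ x
            + (Lfn n θ)^2 * ∑ x ∈ Finset.range (n + 1), ffPMF n θ x := by
          rw [Finset.sum_mul, Finset.mul_sum, Finset.mul_sum, ← Finset.sum_sub_distrib,
            ← Finset.sum_add_distrib]
          refine Finset.sum_congr rfl fun x _ => ?_
          field_simp
          ring
      _ = ellFn n θ / θ := by
          rw [hS0, hS1, hS2, hLfn, hell]
          field_simp
          ring
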